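/- For every real t > 0, the function (x₁,x₂) ↦ x₁·e^{−t(2x₁+x₂)} is integrable on P with respect to Lebesgue measure on ℝ², and ∫_P x₁·e^{−t(2x₁+x₂)} d(x₁,x₂) = e^t·(2e^t(1−t) − (2−t)) / (2t³). In particular this integral vanishes if and only if 2e^t(1−t) = 2−t. -/

import Mathlib

open MeasureTheory Real Set Filter Topology


lemma antideriv (t : ℝ) (ht : t ≠ 0) (x : ℝ) :
    HasDerivAt (fun x => -((x/(2*t)+1/(4*t^2)) * Real.exp (-(2*t*x))))
      (x * Real.exp (-(2*t*x))) x := by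
  have h1 : HasDerivAt (fun x : ℝ => -(2*t*x)) (-(2*t)) x := by
    exact ((hasDerivAt_id x).const_mul (2*t)).neg.congr_deriv (by ring)
  have hexp := h1.exp
  have hlin : HasDerivAt (fun x : ℝ => x/(2*t)+1/(4*t^2)) (1/(2*t)) x := by
    exact ((hasDerivAt_id x).div_const (2*t)).add_const (1/(4*t^2))
  have := (hlin.mul hexp).neg
  refine this.congr_deriv ?_
  have := Real.exp_ne_zero (-(2*t*x))
  field_simp
  ring

lemma tendsto0 (t : ℝ) (ht : 0 < t) :
    Tendsto (fun x => -((x/(2*t)+1/(4*t^2)) * Real.exp (-(2*t*x)))) atTop (𝓝 0) := by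
  have h2t : (0:ℝ) < 2*t := by linarith
  have h1 : Tendsto (fun x : ℝ => 2*t*x) atTop atTop :=
    Filter.Tendsto.const_mul_atTop h2t tendsto_id
  have hA : Tendsto (fun x : ℝ => (2*t*x)^1 * Real.exp (-(2*t*x))) atTop (𝓝 0) :=
    (Real.tendsto_pow_mul_exp_neg_atTop_nhds_zero 1).comp h1
  have hB : Tendsto (fun x : ℝ => Real.exp (-(2*t*x))) atTop (𝓝 0) :=
    Real.tendsto_exp_neg_atTop_nhds_zero.comp h1
  have := ((hA.const_mul (-(1/(4*t^2)))).add (hB.const_mul (-(1/(4*t^2)))))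
  simp only [mul_zero, add_zero] at this
  refine this.congr fun x => ?_
  field_simp
  ring

lemma integrableB (t : ℝ) (ht : 0 < t) (a : ℝ) :
    IntegrableOn (fun x => x * Real.exp (-(2*t*x))) (Ioi a) := by
  set b := max a 0 with hb
  have hab : a ≤ b := le_max_left _ _
  have h1 : IntegrableOn (fun x => x * Real.exp (-(2*t*x))) (Ioc a b) :=
    (Continuous.integrableOn_Ioc (by continuity))
  have h2 : IntegrableOn (fun x => x * Real.exp (-(2*t*x))) (Ioi b) := by
    refine integrableOn_Ioi_deriv_of_nonneg' (fun x _ => antideriv t ht.ne' x)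
      (fun x hx => ?_) (tendsto0 t ht)
    have hx0 : (0:ℝ) ≤ x := le_trans (le_max_right a 0) (le_of_lt hx)
    positivity
  have := h1.union h2
  rwa [Ioc_union_Ioi_eq_Ioi hab] at this

lemma valueB (t : ℝ) (ht : 0 < t) (a : ℝ) :
    ∫ x in Ioi a, x * Real.exp (-(2*t*x)) = (a/(2*t)+1/(4*t^2)) * Real.exp (-(2*t*a)) := by
  have := integral_Ioi_of_hasDerivAt_of_tendsto' (fun x _ => antideriv t ht.ne' x)
    (integrableB t ht a) (tendsto0 t ht)
  rw [this]; ring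

lemma intervalExp (t : ℝ) (ht : t ≠ 0) (a b : ℝ) :
    ∫ y in a..b, Real.exp (-(t*y)) = (Real.exp (-(t*a)) - Real.exp (-(t*b)))/t := by
  have hd : ∀ y ∈ Set.uIcc a b, HasDerivAt (fun y => -(Real.exp (-(t*y)))/t)
      (Real.exp (-(t*y))) y := by
    intro y _
    have h1 : HasDerivAt (fun y : ℝ => -(t*y)) (-t) y := by
      exact ((hasDerivAt_id y).const_mul t).neg.congr_deriv (by ring)
    have := (h1.exp.neg).div_const t
    refine this.congr_deriv ?_
    field_simp
  rw [intervalIntegral.integral_eq_sub_of_hasDerivAt hd ((Continuous.intervalIntegrable (by fun_prop)) _ _)]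
  field_simp
  ring

lemma intervalPiece (t : ℝ) (ht : t ≠ 0) :
    ∫ y in (-1:ℝ)..0, Real.exp (-(t*y)) * (((-1-y)/(2*t) + 1/(4*t^2)) * Real.exp (-(2*t*(-1-y))))
      = (1/(4*t^2)) * Real.exp (2*t) * ((3-2*t)/t - 2*0)
        - (1/(4*t^2)) * Real.exp (2*t) * Real.exp (t*(-1)) * ((3-2*t)/t - 2*(-1)) := by
  have hd : ∀ y ∈ Set.uIcc (-1:ℝ) 0, HasDerivAt
      (fun y => (1/(4*t^2)) * Real.exp (2*t) * Real.exp (t*y) * ((3-2*t)/t - 2*y))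
      (Real.exp (-(t*y)) * (((-1-y)/(2*t) + 1/(4*t^2)) * Real.exp (-(2*t*(-1-y))))) y := by
    intro y _
    have h1 : HasDerivAt (fun y : ℝ => t*y) t y := by
      simpa using (hasDerivAt_id y).const_mul t
    have h2 : HasDerivAt (fun y : ℝ => (3-2*t)/t - 2*y) (-2) y := by
      simpa using ((hasDerivAt_id y).const_mul 2).const_sub ((3-2*t)/t)
    have := ((h1.exp.const_mul ((1/(4*t^2)) * Real.exp (2*t))).mul h2)
    refine this.congr_deriv ?_
    rw [show -(2*t*(-1-y)) = 2*t + (t*y + t*y) by ring, Real.exp_add, Real.exp_add,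
      Real.exp_neg]
    have h3 := Real.exp_ne_zero (t*y)
    field_simp
    ring
  rw [intervalIntegral.integral_eq_sub_of_hasDerivAt hd ((Continuous.intervalIntegrable (by fun_prop)) _ _)]
  simp



/-- The moment polytope `P_{-K_M}` of the blowup of `ℂ×ℙ¹` at a torus-fixed point:
`P = {(x₁,x₂) ∈ ℝ² : x₁ ≥ −1, −1 ≤ x₂ ≤ 1, x₁ + x₂ ≥ −1}`. -/
def momentPolytope : Set (ℝ × ℝ) :=
  {p | -1 ≤ p.1 ∧ -1 ≤ p.2 ∧ p.2 ≤ 1 ∧ -1 ≤ p.1 + p.2}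

lemma hPmeas : MeasurableSet momentPolytope := by
  have : momentPolytope = {p : ℝ×ℝ | -1 ≤ p.1} ∩ ({p | -1 ≤ p.2} ∩ ({p | p.2 ≤ 1} ∩ {p | -1 ≤ p.1 + p.2})) := by
    ext p; simp [momentPolytope, and_assoc]
  rw [this]
  exact (measurableSet_le measurable_const measurable_fst).inter
    ((measurableSet_le measurable_const measurable_snd).inter
      ((measurableSet_le measurable_snd measurable_const).inter
        (measurableSet_le measurable_const (measurable_fst.add measurable_snd))))

lemma hInt (t : ℝ) (ht : 0 < t) :
    IntegrableOn (fun p : ℝ × ℝ => p.1 * Real.exp (-(t * (2 * p.1 + p.2))))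
      momentPolytope volume := by
  have hfe : (fun p : ℝ×ℝ => p.1 * Real.exp (-(t*(2*p.1+p.2))))
      = fun p : ℝ×ℝ => (p.1 * Real.exp (-(2*t*p.1))) * (Real.exp (-(t*p.2))) := by
    funext p
    rw [mul_assoc, ← Real.exp_add]
    ring_nf
  have hg : IntegrableOn (fun x : ℝ => x * Real.exp (-(2*t*x))) (Ici (-1)) := by
    rw [integrableOn_Ici_iff_integrableOn_Ioi]
    exact integrableB t ht (-1)
  have hh : IntegrableOn (fun y : ℝ => Real.exp (-(t*y))) (Icc (-1:ℝ) 1) :=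
    Continuous.integrableOn_Icc (by fun_prop)
  have hprod : IntegrableOn (fun p : ℝ×ℝ => p.1 * Real.exp (-(t*(2*p.1+p.2))))
      (Ici (-1:ℝ) ×ˢ Icc (-1:ℝ) 1) := by
    rw [hfe, IntegrableOn, Measure.volume_eq_prod, ← Measure.prod_restrict]
    exact hg.mul_prod hh
  exact hprod.mono_set (fun p hp => ⟨hp.1, hp.2.1, hp.2.2.1⟩)

noncomputable def aa (y : ℝ) : ℝ := max (-1) (-1 - y)

lemma hsec (y : ℝ) (hy : y ∈ Icc (-1:ℝ) 1) (x : ℝ) :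
    ((x, y) ∈ momentPolytope ↔ x ∈ Ici (aa y)) := by
  simp only [momentPolytope, Set.mem_setOf_eq, mem_Ici, aa, max_le_iff]
  obtain ⟨h1, h2⟩ := hy
  constructor
  · rintro ⟨hx1, -, -, hx4⟩; exact ⟨hx1, by linarith⟩
  · rintro ⟨hx1, hx2⟩; exact ⟨hx1, h1, h2, by linarith⟩

lemma fubini (t : ℝ) (ht : 0 < t) :
    (∫ p in momentPolytope, p.1 * Real.exp (-(t * (2 * p.1 + p.2)))) =
      ∫ y in Icc (-1:ℝ) 1,
        Real.exp (-(t*y)) * ((aa y/(2*t) + 1/(4*t^2)) * Real.exp (-(2*t*aa y))) := by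
  set f : ℝ × ℝ → ℝ := fun p => p.1 * Real.exp (-(t * (2 * p.1 + p.2))) with hf
  have hint : Integrable (momentPolytope.indicator f) (volume.prod volume) := by
    rw [← Measure.volume_eq_prod]
    exact (integrable_indicator_iff hPmeas).2 (hInt t ht)
  have step1 : (∫ p in momentPolytope, f p) = ∫ y, ∫ x, momentPolytope.indicator f (x, y) := by
    rw [← integral_indicator hPmeas, Measure.volume_eq_prod]
    exact integral_prod_symm _ hint
  rw [step1, ← integral_indicator (measurableSet_Icc : MeasurableSet (Icc (-1:ℝ) 1))]
  congr 1
  funext y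
  by_cases hy : y ∈ Icc (-1:ℝ) 1
  · rw [Set.indicator_of_mem hy]
    have hx : ∀ x, momentPolytope.indicator f (x,y) = (Ici (aa y)).indicator (fun x => f (x,y)) x := by
      intro x
      classical
      rw [Set.indicator_apply, Set.indicator_apply]
      exact if_congr (hsec y hy x) rfl rfl
    rw [show (fun x => momentPolytope.indicator f (x,y)) = fun x => (Ici (aa y)).indicator (fun x => f (x,y)) x from funext hx]
    rw [integral_indicator measurableSet_Ici]
    have hfx : (fun x => f (x, y)) = fun x => Real.exp (-(t*y)) * (x * Real.exp (-(2*t*x))) := by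
      funext x
      simp only [hf]
      rw [mul_comm (Real.exp (-(t*y))), mul_assoc, ← Real.exp_add]
      ring_nf
    rw [hfx, MeasureTheory.integral_const_mul, integral_Ici_eq_integral_Ioi, valueB t ht (aa y)]
  · rw [Set.indicator_of_notMem hy]
    have : ∀ x, momentPolytope.indicator f (x,y) = 0 := by
      intro x
      apply Set.indicator_of_notMem
      intro hmem
      exact hy ⟨hmem.2.1, hmem.2.2.1⟩
    simp only [this, integral_zero]

lemma computeG (t : ℝ) (ht : 0 < t) :
    (∫ y in Icc (-1:ℝ) 1,
        Real.exp (-(t*y)) * ((aa y/(2*t) + 1/(4*t^2)) * Real.exp (-(2*t*aa y))))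
      = Real.exp t * (2 * Real.exp t * (1 - t) - (2 - t)) / (2 * t ^ 3) := by
  have htne : t ≠ 0 := ht.ne'
  have hcont : Continuous (fun y : ℝ =>
      Real.exp (-(t*y)) * ((aa y/(2*t) + 1/(4*t^2)) * Real.exp (-(2*t*aa y)))) := by
    have haa : Continuous aa := continuous_const.max (continuous_const.sub continuous_id)
    fun_prop
  rw [MeasureTheory.integral_Icc_eq_integral_Ioc,
    ← intervalIntegral.integral_of_le (by norm_num : (-1:ℝ) ≤ 1),
    ← intervalIntegral.integral_add_adjacent_intervals
      ((hcont.intervalIntegrable (-1) 0)) ((hcont.intervalIntegrable 0 1))]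
  have hleft : (∫ y in (-1:ℝ)..0,
      Real.exp (-(t*y)) * ((aa y/(2*t) + 1/(4*t^2)) * Real.exp (-(2*t*aa y))))
      = ∫ y in (-1:ℝ)..0, Real.exp (-(t*y)) * (((-1-y)/(2*t) + 1/(4*t^2)) * Real.exp (-(2*t*(-1-y)))) := by
    apply intervalIntegral.integral_congr
    intro y hy
    rw [Set.uIcc_of_le (by norm_num : (-1:ℝ) ≤ 0)] at hy
    have : aa y = -1 - y := max_eq_right (by linarith [hy.2])
    simp only [this]
  have hright : (∫ y in (0:ℝ)..1,
      Real.exp (-(t*y)) * ((aa y/(2*t) + 1/(4*t^2)) * Real.exp (-(2*t*aa y))))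
      = ∫ y in (0:ℝ)..1, Real.exp (-(t*y)) * (((-1:ℝ)/(2*t) + 1/(4*t^2)) * Real.exp (-(2*t*(-1:ℝ)))) := by
    apply intervalIntegral.integral_congr
    intro y hy
    rw [Set.uIcc_of_le (by norm_num : (0:ℝ) ≤ 1)] at hy
    have : aa y = -1 := max_eq_left (by linarith [hy.1])
    simp only [this]
  rw [hleft, hright, intervalPiece t htne]
  rw [intervalIntegral.integral_mul_const, intervalExp t htne]
  have hE := Real.exp_ne_zero t
  rw [show -(2*t*(-1:ℝ)) = t + t by ring, show (2:ℝ)*t = t + t by ring,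
    show -(t*(0:ℝ)) = 0 by ring, show -(t*(1:ℝ)) = -t by ring,
    show t*(-1:ℝ) = -t by ring, Real.exp_add, Real.exp_zero, Real.exp_neg]
  field_simp
  ring

/-- For every `t > 0`, the function `(x₁,x₂) ↦ x₁·e^{−t(2x₁+x₂)}` is integrable on `P`
with respect to Lebesgue measure on `ℝ²`, its integral equals
`e^t·(2e^t(1−t) − (2−t)) / (2t³)`, and in particular the integral vanishes if and only if
`2e^t(1−t) = 2−t`. -/
theorem stmt_4 (t : ℝ) (ht : 0 < t) :
    IntegrableOn (fun p : ℝ × ℝ => p.1 * Real.exp (-(t * (2 * p.1 + p.2))))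
      momentPolytope volume ∧
    (∫ p in momentPolytope, p.1 * Real.exp (-(t * (2 * p.1 + p.2)))) =
      Real.exp t * (2 * Real.exp t * (1 - t) - (2 - t)) / (2 * t ^ 3) ∧
    ((∫ p in momentPolytope, p.1 * Real.exp (-(t * (2 * p.1 + p.2)))) = 0 ↔
      2 * Real.exp t * (1 - t) = 2 - t) := by
  refine ⟨hInt t ht, (fubini t ht).trans (computeG t ht), ?_⟩
  rw [(fubini t ht).trans (computeG t ht), div_eq_zero_iff]
  constructor
  · rintro (h | h)
    · rcases mul_eq_zero.1 h with h | h
      · exact absurd h (Real.exp_ne_zero t)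
      · exact sub_eq_zero.1 h
    · exfalso
      have : t ^ 3 > 0 := by positivity
      nlinarith
  · intro h
    left
    rw [sub_eq_zero.2 h, mul_zero]
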